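/- Assume all parameters are positive and c₁(δ₀) = (b+γ) + (s_M/μ_M)(N₃ β + η) − δ₀ > 0. Then there exist ε > 0 and a differentiable function λ₁ : (δ₀ − ε, δ₀ + ε) → ℝ such that for every δ in this interval, λ₁(δ)² + c₁(δ) λ₁(δ) + c₂(δ) = 0, with λ₁(δ₀) = 0 and derivative λ₁′(δ₀) = (b+γ)/c₁(δ₀) > 0. Hence near the threshold δ₀ the dominant eigenvalue satisfies λ₁(δ) = (b+γ)(δ − δ₀)/c₁(δ₀) + o(δ − δ₀), so the infection grows for δ slightly above δ₀ and decays for δ slightly below δ₀. -/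

import Mathlib

open Set

/-- If c₁(δ₀) > 0, there exist ε > 0 and a differentiable branch
λ₁ : (δ₀−ε, δ₀+ε) → ℝ of roots of λ² + c₁(δ)λ + c₂(δ) = 0 with λ₁(δ₀) = 0 and
λ₁′(δ₀) = (b+γ)/c₁(δ₀) > 0. -/
theorem dominant_eigenvalue_branch_at_threshold
    (sM μM β b γ N₁ N₂ N₃ η : ℝ)
    (hsM : 0 < sM) (hμM : 0 < μM) (hβ : 0 < β) (hb : 0 < b) (hγ : 0 < γ)
    (hN₁ : 0 < N₁) (hN₂ : 0 < N₂) (hN₃ : 0 < N₃) (hη : 0 < η)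
    (c₁ c₂ : ℝ → ℝ) (δ₀ : ℝ)
    (hc₁ : ∀ δ : ℝ, c₁ δ = (b + γ) + (sM / μM) * (N₃ * β + η) - δ)
    (hδ₀ : δ₀ = (sM / μM) * (η - β * ((N₂ - N₃) * γ + (N₁ - N₃) * b) / (b + γ)))
    (hc₂ : ∀ δ : ℝ, c₂ δ = (b + γ) * (δ₀ - δ))
    (hc₁pos : 0 < c₁ δ₀) :
    ∃ ε > 0, ∃ lam₁ : ℝ → ℝ,
      (∀ δ ∈ Ioo (δ₀ - ε) (δ₀ + ε),
        DifferentiableAt ℝ lam₁ δ ∧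
        (lam₁ δ) ^ 2 + c₁ δ * lam₁ δ + c₂ δ = 0) ∧
      lam₁ δ₀ = 0 ∧
      HasDerivAt lam₁ ((b + γ) / c₁ δ₀) δ₀ ∧
      0 < (b + γ) / c₁ δ₀ := by
  set C : ℝ := (b + γ) + (sM / μM) * (N₃ * β + η) with hC
  set f : ℝ → ℝ := fun δ => C - δ with hf
  set g : ℝ → ℝ := fun δ => (b + γ) * (δ₀ - δ) with hg
  set D : ℝ → ℝ := fun δ => f δ ^ 2 - 4 * g δ with hD
  have hfc₁ : ∀ δ, c₁ δ = f δ := fun δ => by rw [hc₁ δ]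
  have hgc₂ : ∀ δ, c₂ δ = g δ := fun δ => by rw [hc₂ δ]
  have hf0 : 0 < f δ₀ := by rw [← hfc₁]; exact hc₁pos
  have hg0 : g δ₀ = 0 := by simp [hg]
  have hD0 : 0 < D δ₀ := by simp [hD, hg0]; positivity
  -- derivative facts
  have hfder : ∀ δ : ℝ, HasDerivAt f (-1) δ := fun δ => by
    simpa using (hasDerivAt_id δ).const_sub C
  have hgder : ∀ δ : ℝ, HasDerivAt g (-(b + γ)) δ := fun δ => by
    simpa using ((hasDerivAt_id δ).const_sub δ₀).const_mul (b + γ)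
  have hDder : ∀ δ : ℝ, HasDerivAt D (2 * f δ * (-1) - 4 * (-(b + γ))) δ := fun δ => by
    simpa using ((hfder δ).fun_pow 2).fun_sub ((hgder δ).const_mul 4)
  -- continuity of D
  have hDcont : Continuous D := by
    apply Continuous.sub
    · exact ((continuous_const.sub continuous_id).pow 2)
    · exact continuous_const.mul (continuous_const.mul (continuous_const.sub continuous_id))
  have hmem : D ⁻¹' (Ioi 0) ∈ nhds δ₀ :=
    hDcont.continuousAt.preimage_mem_nhds (Ioi_mem_nhds hD0)
  obtain ⟨ε, hεpos, hεsub⟩ := Metric.mem_nhds_iff.mp hmem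
  refine ⟨ε, hεpos, fun δ => (-(f δ) + Real.sqrt (D δ)) / 2, ?_, ?_, ?_, ?_⟩
  · intro δ hδ
    have hDpos : 0 < D δ := by
      have : δ ∈ Metric.ball δ₀ ε := by
        rw [Real.ball_eq_Ioo]; exact hδ
      exact hεsub this
    have hsder : HasDerivAt (fun δ => Real.sqrt (D δ))
        ((1 / (2 * Real.sqrt (D δ))) * (2 * f δ * (-1) - 4 * (-(b + γ)))) δ :=
      (Real.hasDerivAt_sqrt hDpos.ne').comp δ (hDder δ)
    refine ⟨(((hfder δ).neg.add hsder).div_const 2).differentiableAt, ?_⟩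
    rw [hfc₁, hgc₂]
    have hsq : Real.sqrt (D δ) ^ 2 = f δ ^ 2 - 4 * g δ := Real.sq_sqrt hDpos.le
    show ((-(f δ) + Real.sqrt (D δ)) / 2) ^ 2 + f δ * ((-(f δ) + Real.sqrt (D δ)) / 2) + g δ = 0
    linear_combination hsq / 4
  · have : Real.sqrt (D δ₀) = f δ₀ := by
      rw [hD]; simp only [hg0, mul_zero, sub_zero]
      rw [Real.sqrt_sq hf0.le]
    simp [this]
  · have hsder : HasDerivAt (fun δ => Real.sqrt (D δ))
        ((1 / (2 * Real.sqrt (D δ₀))) * (2 * f δ₀ * (-1) - 4 * (-(b + γ)))) δ₀ :=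
      (Real.hasDerivAt_sqrt hD0.ne').comp δ₀ (hDder δ₀)
    have hder := (((hfder δ₀).neg.add hsder).div_const 2)
    have hs : Real.sqrt (D δ₀) = f δ₀ := by
      rw [hD]; simp only [hg0, mul_zero, sub_zero]
      rw [Real.sqrt_sq hf0.le]
    have hval : (-(-1 : ℝ) + (1 / (2 * Real.sqrt (D δ₀))) * (2 * f δ₀ * (-1) - 4 * (-(b + γ)))) / 2
        = (b + γ) / c₁ δ₀ := by
      rw [hs, hfc₁ δ₀] at *
      field_simp
      ring
    rwa [hval] at hder
  · exact div_pos (by positivity) hc₁pos
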